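/- Let 0 < a < b, α > 0, ρ > 0, and let f : [a,b] → ℝ be convex and integrable. Define F(x) = f(x) + f(a+b−x). Then F((a+b)/2) ≤ (ρ^α Γ(α+1)/(2(b^ρ − a^ρ)^α)) [^ρI^α_{a+}F(b) + ^ρI^α_{b-}F(a)] ≤ (F(a)+F(b))/2. -/

import Mathlib

open MeasureTheory intervalIntegral Real
open Set

lemma rpow_strictMonoOn (ρ : ℝ) (hρ : 0 < ρ) : StrictMonoOn (fun t : ℝ => t ^ ρ) (Set.Ici 0) :=
  fun x hx y _ hxy => Real.rpow_lt_rpow hx hxy hρ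

lemma subst_aux (a b ρ : ℝ) (ha : 0 < a) (hab : a ≤ b) (hρ : 0 < ρ) (g : ℝ → ℝ)
    (hg1 : IntegrableOn g (Set.Icc (a ^ ρ) (b ^ ρ)))
    (hg2 : ContinuousOn g (Set.Ioo (a ^ ρ) (b ^ ρ))) :
    IntervalIntegrable (fun t => t ^ (ρ - 1) * g (t ^ ρ)) volume a b ∧
    (∫ t in a..b, t ^ (ρ - 1) * g (t ^ ρ)) = ρ⁻¹ * ∫ u in (a ^ ρ)..(b ^ ρ), g u := by
  have hmaps : ∀ t ∈ Set.Icc a b, t ^ ρ ∈ Set.Icc (a ^ ρ) (b ^ ρ) := by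
    intro t ht
    exact ⟨Real.rpow_le_rpow ha.le ht.1 hρ.le,
      Real.rpow_le_rpow (ha.le.trans ht.1) ht.2 hρ.le⟩
  have hderiv : ∀ t ∈ Set.Icc a b, HasDerivAt (fun x : ℝ => x ^ ρ) (ρ * t ^ (ρ - 1)) t := by
    intro t ht
    exact Real.hasDerivAt_rpow_const (Or.inl (ha.trans_le ht.1).ne')
  have hinj : Set.InjOn (fun t : ℝ => t ^ ρ) (Set.Icc a b) :=
    (rpow_strictMonoOn ρ hρ).injOn.mono (fun t ht => le_of_lt (ha.trans_le ht.1))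
  -- integrability
  have hint : IntegrableOn (fun t => |ρ * t ^ (ρ - 1)| • g (t ^ ρ)) (Set.Icc a b) := by
    rw [← integrableOn_image_iff_integrableOn_abs_deriv_smul measurableSet_Icc
      (fun x hx => (hderiv x hx).hasDerivWithinAt) hinj g]
    exact hg1.mono_set (fun u ⟨t, ht, htu⟩ => htu ▸ hmaps t ht)
  have hint2 : IntegrableOn (fun t => t ^ (ρ - 1) * g (t ^ ρ)) (Set.Icc a b) := by
    have h3 : IntegrableOn (fun t => ρ⁻¹ * |ρ * t ^ (ρ - 1)| • g (t ^ ρ)) (Set.Icc a b) :=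
      hint.const_mul ρ⁻¹
    apply IntegrableOn.congr_fun h3 _ measurableSet_Icc
    intro t ht
    have ht0 : (0:ℝ) < t := ha.trans_le ht.1
    show ρ⁻¹ * |ρ * t ^ (ρ - 1)| • g (t ^ ρ) = t ^ (ρ - 1) * g (t ^ ρ)
    rw [abs_of_nonneg (by positivity : (0:ℝ) ≤ ρ * t ^ (ρ - 1)), smul_eq_mul]
    field_simp
  constructor
  · exact (intervalIntegrable_iff_integrableOn_Icc_of_le hab).mpr hint2
  · have key : (∫ t in a..b, (ρ * t ^ (ρ - 1)) • g (t ^ ρ)) = ∫ u in (a ^ ρ)..(b ^ ρ), g u := by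
      apply integral_comp_smul_deriv''' (f := fun t => t ^ ρ) (f' := fun t => ρ * t ^ (ρ - 1))
      · exact fun t ht => (Real.continuousAt_rpow_const t ρ
          (Or.inl (by rw [Set.uIcc_of_le hab] at ht; exact (ha.trans_le ht.1).ne'))).continuousWithinAt
      · intro t ht
        rw [min_eq_left hab, max_eq_right hab] at ht
        exact (hderiv t (Set.Ioo_subset_Icc_self ht)).hasDerivWithinAt
      · apply hg2.mono
        rintro u ⟨t, ht, rfl⟩
        rw [min_eq_left hab, max_eq_right hab] at ht
        exact ⟨Real.rpow_lt_rpow ha.le ht.1 hρ, Real.rpow_lt_rpow (ha.trans ht.1).le ht.2 hρ⟩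
      · apply hg1.mono_set
        rintro u ⟨t, ht, rfl⟩
        rw [Set.uIcc_of_le hab] at ht
        exact hmaps t ht
      · rw [Set.uIcc_of_le hab]
        apply IntegrableOn.congr_fun hint _ measurableSet_Icc
        intro t ht
        have ht0 : (0:ℝ) < t := ha.trans_le ht.1
        show |ρ * t ^ (ρ - 1)| • g (t ^ ρ) = (ρ * t ^ (ρ - 1)) • g (t ^ ρ)
        rw [abs_of_nonneg (by positivity : (0:ℝ) ≤ ρ * t ^ (ρ - 1))]
    have step : (∫ t in a..b, (ρ * t ^ (ρ - 1)) • g (t ^ ρ)) =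
        ρ * ∫ t in a..b, t ^ (ρ - 1) * g (t ^ ρ) := by
      rw [← intervalIntegral.integral_const_mul]
      congr 1
      ext t
      simp only [smul_eq_mul]
      ring
    rw [← key, step, inv_mul_cancel_left₀ hρ.ne']

lemma pow_int_left (A B α : ℝ) (hAB : A ≤ B) (hα : 0 < α) :
    IntegrableOn (fun u => (B - u) ^ (α - 1)) (Set.Icc A B) ∧
    (∫ u in A..B, (B - u) ^ (α - 1)) = (B - A) ^ α / α := by
  have hbase : IntervalIntegrable (fun x : ℝ => x ^ (α - 1)) volume 0 (B - A) :=
    intervalIntegral.intervalIntegrable_rpow' (by linarith)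
  have hcomp := hbase.comp_sub_left B
  rw [sub_zero, sub_sub_cancel] at hcomp
  constructor
  · rw [integrableOn_Icc_iff_integrableOn_Ioc]
    exact (intervalIntegrable_iff_integrableOn_Ioc_of_le hAB).mp hcomp.symm
  · rw [integral_comp_sub_left (fun x => x ^ (α - 1)) B, sub_self,
      integral_rpow (Or.inl (by linarith)), sub_add_cancel,
      Real.zero_rpow hα.ne', sub_zero]

lemma pow_int_right (A B α : ℝ) (hAB : A ≤ B) (hα : 0 < α) :
    IntegrableOn (fun u => (u - A) ^ (α - 1)) (Set.Icc A B) ∧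
    (∫ u in A..B, (u - A) ^ (α - 1)) = (B - A) ^ α / α := by
  have hbase : IntervalIntegrable (fun x : ℝ => x ^ (α - 1)) volume 0 (B - A) :=
    intervalIntegral.intervalIntegrable_rpow' (by linarith)
  have hcomp := hbase.comp_sub_right A
  rw [zero_add, sub_add_cancel] at hcomp
  constructor
  · rw [integrableOn_Icc_iff_integrableOn_Ioc]
    exact (intervalIntegrable_iff_integrableOn_Ioc_of_le hAB).mp hcomp
  · rw [integral_comp_sub_right (fun x => x ^ (α - 1)) A, sub_self,
      integral_rpow (Or.inl (by linarith)), sub_add_cancel,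
      Real.zero_rpow hα.ne', sub_zero]

lemma F_bounds (a b : ℝ) (hab : a < b) (f : ℝ → ℝ)
    (hconv : ConvexOn ℝ (Set.Icc a b) f) (x : ℝ) (hx : x ∈ Set.Icc a b) :
    f ((a + b) / 2) + f ((a + b) / 2) ≤ f x + f (a + b - x) ∧
    f x + f (a + b - x) ≤ f a + f b := by
  obtain ⟨hx1, hx2⟩ := hx
  have hx' : a + b - x ∈ Set.Icc a b := ⟨by linarith, by linarith⟩
  have hba : (0:ℝ) < b - a := by linarith
  constructor
  · have h := hconv.2 (Set.mem_Icc.mpr ⟨hx1, hx2⟩) hx' (by norm_num : (0:ℝ) ≤ 1/2)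
      (by norm_num : (0:ℝ) ≤ 1/2) (by norm_num)
    have he : (1/2 : ℝ) • x + (1/2 : ℝ) • (a + b - x) = (a + b) / 2 := by
      simp [smul_eq_mul]; ring
    rw [he] at h
    simp only [smul_eq_mul] at h
    linarith
  · set l := (b - x) / (b - a) with hl
    set m := (x - a) / (b - a) with hm
    have hl0 : 0 ≤ l := div_nonneg (by linarith) hba.le
    have hm0 : 0 ≤ m := div_nonneg (by linarith) hba.le
    have hlm : l + m = 1 := by rw [hl, hm]; field_simp; ring
    have h1 := hconv.2 (Set.left_mem_Icc.mpr hab.le) (Set.right_mem_Icc.mpr hab.le) hl0 hm0 hlm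
    have h2 := hconv.2 (Set.left_mem_Icc.mpr hab.le) (Set.right_mem_Icc.mpr hab.le) hm0 hl0
      (by linarith)
    simp only [smul_eq_mul] at h1 h2
    have e1 : l * a + m * b = x := by rw [hl, hm]; field_simp; ring
    have e2 : m * a + l * b = a + b - x := by rw [hl, hm]; field_simp; ring
    rw [e1] at h1
    rw [e2] at h2
    have h3 : l * f a + m * f b + (m * f a + l * f b) = f a + f b := by
      have hm1 : m = 1 - l := by linarith
      rw [hm1]; ring
    linarith

theorem katugampola_hh_F (a b α ρ : ℝ) (ha : 0 < a) (hab : a < b)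
    (hα : 0 < α) (hρ : 0 < ρ) (f F : ℝ → ℝ)
    (hconv : ConvexOn ℝ (Set.Icc a b) f)
    (hint : IntervalIntegrable f volume a b)
    (hF : ∀ x, F x = f x + f (a + b - x)) :
    F ((a + b) / 2) ≤
      (ρ ^ α * Real.Gamma (α + 1) / (2 * (b ^ ρ - a ^ ρ) ^ α)) *
        ((ρ ^ (1 - α) / Real.Gamma α) *
            (∫ t in a..b, t ^ (ρ - 1) * (b ^ ρ - t ^ ρ) ^ (α - 1) * F t) +
         (ρ ^ (1 - α) / Real.Gamma α) *
            (∫ t in a..b, t ^ (ρ - 1) * (t ^ ρ - a ^ ρ) ^ (α - 1) * F t)) ∧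
    (ρ ^ α * Real.Gamma (α + 1) / (2 * (b ^ ρ - a ^ ρ) ^ α)) *
        ((ρ ^ (1 - α) / Real.Gamma α) *
            (∫ t in a..b, t ^ (ρ - 1) * (b ^ ρ - t ^ ρ) ^ (α - 1) * F t) +
         (ρ ^ (1 - α) / Real.Gamma α) *
            (∫ t in a..b, t ^ (ρ - 1) * (t ^ ρ - a ^ ρ) ^ (α - 1) * F t)) ≤
      (F a + F b) / 2 := by
  have hab' : a ≤ b := hab.le
  have hABlt : a ^ ρ < b ^ ρ := Real.rpow_lt_rpow ha.le hab hρ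
  have hBA : (0:ℝ) < b ^ ρ - a ^ ρ := by linarith
  -- continuity of the kernels on the open interval
  have hg1c : ContinuousOn (fun u : ℝ => (b ^ ρ - u) ^ (α - 1)) (Set.Ioo (a ^ ρ) (b ^ ρ)) := by
    apply ContinuousOn.rpow_const (continuous_const.sub continuous_id).continuousOn
    exact fun u hu => Or.inl (by have := hu.2; intro h; simp at h; linarith)
  have hg2c : ContinuousOn (fun u : ℝ => (u - a ^ ρ) ^ (α - 1)) (Set.Ioo (a ^ ρ) (b ^ ρ)) := by
    apply ContinuousOn.rpow_const (continuous_id.sub continuous_const).continuousOn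
    exact fun u hu => Or.inl (by have := hu.1; intro h; simp at h; linarith)
  obtain ⟨hw1, hv1⟩ := subst_aux a b ρ ha hab' hρ (fun u => (b ^ ρ - u) ^ (α - 1))
    (pow_int_left (a ^ ρ) (b ^ ρ) α hABlt.le hα).1 hg1c
  obtain ⟨hw2, hv2⟩ := subst_aux a b ρ ha hab' hρ (fun u => (u - a ^ ρ) ^ (α - 1))
    (pow_int_right (a ^ ρ) (b ^ ρ) α hABlt.le hα).1 hg2c
  rw [(pow_int_left (a ^ ρ) (b ^ ρ) α hABlt.le hα).2] at hv1
  rw [(pow_int_right (a ^ ρ) (b ^ ρ) α hABlt.le hα).2] at hv2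
  have hw1' : IntervalIntegrable (fun t => t ^ (ρ - 1) * (b ^ ρ - t ^ ρ) ^ (α - 1)) volume a b :=
    hw1
  have hw2' : IntervalIntegrable (fun t => t ^ (ρ - 1) * (t ^ ρ - a ^ ρ) ^ (α - 1)) volume a b :=
    hw2
  have hv1' : (∫ t in a..b, t ^ (ρ - 1) * (b ^ ρ - t ^ ρ) ^ (α - 1))
      = ρ⁻¹ * ((b ^ ρ - a ^ ρ) ^ α / α) := hv1
  have hv2' : (∫ t in a..b, t ^ (ρ - 1) * (t ^ ρ - a ^ ρ) ^ (α - 1))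
      = ρ⁻¹ * ((b ^ ρ - a ^ ρ) ^ α / α) := hv2
  -- nonnegativity of weights
  have hw1nn : ∀ t ∈ Set.Icc a b, 0 ≤ t ^ (ρ - 1) * (b ^ ρ - t ^ ρ) ^ (α - 1) := by
    intro t ht
    have ht0 : (0:ℝ) ≤ t := ha.le.trans ht.1
    exact mul_nonneg (Real.rpow_nonneg ht0 _)
      (Real.rpow_nonneg (sub_nonneg.mpr (Real.rpow_le_rpow ht0 ht.2 hρ.le)) _)
  have hw2nn : ∀ t ∈ Set.Icc a b, 0 ≤ t ^ (ρ - 1) * (t ^ ρ - a ^ ρ) ^ (α - 1) := by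
    intro t ht
    have ht0 : (0:ℝ) ≤ t := ha.le.trans ht.1
    exact mul_nonneg (Real.rpow_nonneg ht0 _)
      (Real.rpow_nonneg (sub_nonneg.mpr (Real.rpow_le_rpow ha.le ht.1 hρ.le)) _)
  -- bounds on F
  have hmid : a + b - (a + b) / 2 = (a + b) / 2 := by ring
  have hlow : ∀ x ∈ Set.Icc a b, F ((a + b) / 2) ≤ F x := by
    intro x hx
    rw [hF ((a + b) / 2), hF x, hmid]
    have h := (F_bounds a b hab f hconv x hx).1
    linarith
  have hhigh : ∀ x ∈ Set.Icc a b, F x ≤ f a + f b := by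
    intro x hx
    rw [hF x]
    exact (F_bounds a b hab f hconv x hx).2
  -- integrability of F
  have hFint : IntervalIntegrable F volume a b := by
    have hrefl := hint.comp_sub_left (a + b)
    rw [add_sub_cancel_left, add_sub_cancel_right] at hrefl
    have h2 := hint.add hrefl.symm
    have he : (fun x => f x + f (a + b - x)) = F := funext fun x => (hF x).symm
    rwa [he] at h2
  have hFmeas : AEStronglyMeasurable F (volume.restrict (Set.Ioc a b)) :=
    hFint.1.aestronglyMeasurable
  -- uniform bound on |F|
  set C := max |F ((a + b) / 2)| |f a + f b| with hC
  have habs : ∀ x ∈ Set.Icc a b, |F x| ≤ C := by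
    intro x hx
    have h1 := hlow x hx
    have h2 := hhigh x hx
    have h3 := neg_abs_le (F ((a + b) / 2))
    have h4 := le_abs_self (f a + f b)
    rw [abs_le]
    constructor
    · have := le_max_left |F ((a + b) / 2)| |f a + f b|; linarith
    · have := le_max_right |F ((a + b) / 2)| |f a + f b|; linarith
  -- integrability of weight * F
  have hwF : ∀ w : ℝ → ℝ, IntervalIntegrable w volume a b → Measurable w →
      (∀ t ∈ Set.Icc a b, 0 ≤ w t) →
      IntervalIntegrable (fun t => w t * F t) volume a b := by
    intro w hw hwm hwnn
    rw [intervalIntegrable_iff_integrableOn_Ioc_of_le hab']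
    apply Integrable.mono' ((hw.1).mul_const C)
    · exact (hwm.aestronglyMeasurable.restrict).mul hFmeas
    · rw [ae_restrict_iff' measurableSet_Ioc]
      refine ae_of_all _ fun t ht => ?_
      have ht' : t ∈ Set.Icc a b := Set.Ioc_subset_Icc_self ht
      have h0 := hwnn t ht'
      calc ‖w t * F t‖ = w t * |F t| := by
            rw [Real.norm_eq_abs, abs_mul, abs_of_nonneg h0]
        _ ≤ w t * C := mul_le_mul_of_nonneg_left (habs t ht') h0
  have hw1meas : Measurable (fun t : ℝ => t ^ (ρ - 1) * (b ^ ρ - t ^ ρ) ^ (α - 1)) :=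
    (measurable_id.pow_const _).mul
      ((measurable_const.sub (measurable_id.pow_const _)).pow_const _)
  have hw2meas : Measurable (fun t : ℝ => t ^ (ρ - 1) * (t ^ ρ - a ^ ρ) ^ (α - 1)) :=
    (measurable_id.pow_const _).mul
      (((measurable_id.pow_const _).sub measurable_const).pow_const _)
  have hw1F := hwF _ hw1' hw1meas hw1nn
  have hw2F := hwF _ hw2' hw2meas hw2nn
  -- monotone integral bounds
  set m := F ((a + b) / 2) with hm
  set M := f a + f b with hM
  set V := ρ⁻¹ * ((b ^ ρ - a ^ ρ) ^ α / α) with hV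
  have hVpos : 0 < V := mul_pos (inv_pos.mpr hρ)
    (div_pos (Real.rpow_pos_of_pos hBA α) hα)
  have hI1low : V * m ≤ ∫ t in a..b, t ^ (ρ - 1) * (b ^ ρ - t ^ ρ) ^ (α - 1) * F t := by
    have h := intervalIntegral.integral_mono_on hab' (hw1'.mul_const m) hw1F
      (fun t ht => mul_le_mul_of_nonneg_left (hlow t ht) (hw1nn t ht))
    rwa [intervalIntegral.integral_mul_const, hv1'] at h
  have hI1high : (∫ t in a..b, t ^ (ρ - 1) * (b ^ ρ - t ^ ρ) ^ (α - 1) * F t) ≤ V * M := by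
    have h := intervalIntegral.integral_mono_on hab' hw1F (hw1'.mul_const M)
      (fun t ht => mul_le_mul_of_nonneg_left (hhigh t ht) (hw1nn t ht))
    rwa [intervalIntegral.integral_mul_const, hv1'] at h
  have hI2low : V * m ≤ ∫ t in a..b, t ^ (ρ - 1) * (t ^ ρ - a ^ ρ) ^ (α - 1) * F t := by
    have h := intervalIntegral.integral_mono_on hab' (hw2'.mul_const m) hw2F
      (fun t ht => mul_le_mul_of_nonneg_left (hlow t ht) (hw2nn t ht))
    rwa [intervalIntegral.integral_mul_const, hv2'] at h
  have hI2high : (∫ t in a..b, t ^ (ρ - 1) * (t ^ ρ - a ^ ρ) ^ (α - 1) * F t) ≤ V * M := by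
    have h := intervalIntegral.integral_mono_on hab' hw2F (hw2'.mul_const M)
      (fun t ht => mul_le_mul_of_nonneg_left (hhigh t ht) (hw2nn t ht))
    rwa [intervalIntegral.integral_mul_const, hv2'] at h
  -- constants
  have hΓ : 0 < Real.Gamma α := Real.Gamma_pos_of_pos hα
  have hGa : Real.Gamma (α + 1) = α * Real.Gamma α := Real.Gamma_add_one hα.ne'
  have hρρ : ρ ^ α * ρ ^ (1 - α) = ρ := by
    rw [← Real.rpow_add hρ]
    norm_num
  have hPpos : 0 < (b ^ ρ - a ^ ρ) ^ α := Real.rpow_pos_of_pos hBA α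
  set c := (ρ ^ α * Real.Gamma (α + 1) / (2 * (b ^ ρ - a ^ ρ) ^ α)) *
    (ρ ^ (1 - α) / Real.Gamma α) with hc
  have hc' : c = ρ * α / (2 * (b ^ ρ - a ^ ρ) ^ α) := by
    rw [hc, hGa]
    field_simp
    linear_combination hρρ
  have hc0 : 0 < c := by
    rw [hc']
    positivity
  have hc1 : c * (2 * V) = 1 := by
    rw [hc', hV]
    field_simp
  set I1 := ∫ t in a..b, t ^ (ρ - 1) * (b ^ ρ - t ^ ρ) ^ (α - 1) * F t with hI1
  set I2 := ∫ t in a..b, t ^ (ρ - 1) * (t ^ ρ - a ^ ρ) ^ (α - 1) * F t with hI2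
  have hFab : (F a + F b) / 2 = M := by
    have ha' : F a = f a + f b := by rw [hF, add_sub_cancel_left]
    have hb' : F b = f b + f a := by rw [hF, add_sub_cancel_right]
    rw [ha', hb', hM]; ring
  constructor
  · calc m = c * (V * m) + c * (V * m) := by linear_combination (-m) * hc1
      _ ≤ c * I1 + c * I2 :=
        add_le_add (mul_le_mul_of_nonneg_left hI1low hc0.le)
          (mul_le_mul_of_nonneg_left hI2low hc0.le)
      _ = (ρ ^ α * Real.Gamma (α + 1) / (2 * (b ^ ρ - a ^ ρ) ^ α)) *
          ((ρ ^ (1 - α) / Real.Gamma α) * I1 + (ρ ^ (1 - α) / Real.Gamma α) * I2) := by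
        rw [hc]; ring
  · calc (ρ ^ α * Real.Gamma (α + 1) / (2 * (b ^ ρ - a ^ ρ) ^ α)) *
          ((ρ ^ (1 - α) / Real.Gamma α) * I1 + (ρ ^ (1 - α) / Real.Gamma α) * I2)
        = c * I1 + c * I2 := by rw [hc]; ring
      _ ≤ c * (V * M) + c * (V * M) :=
        add_le_add (mul_le_mul_of_nonneg_left hI1high hc0.le)
          (mul_le_mul_of_nonneg_left hI2high hc0.le)
      _ = M := by linear_combination M * hc1
      _ = (F a + F b) / 2 := hFab.symm
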